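/- There is an antichain of cardinality 2^{2^{ℵ₀}} in the Muchnik lattice: there exists a family of mass problems of cardinality 2^{2^{ℵ₀}} whose members are pairwise Muchnik incomparable. -/

import Mathlib

open Cardinal

namespace Muchnik

/-- Oracle partial recursiveness: `f` is partial recursive relative to the oracle `g`. -/
inductive RecursiveIn (g : ℕ → ℕ) : (ℕ →. ℕ) → Prop
  | oracle : RecursiveIn g ↑g
  | zero : RecursiveIn g (pure 0)
  | succ : RecursiveIn g ↑Nat.succ
  | left : RecursiveIn g ↑fun n : ℕ => n.unpair.1
  | right : RecursiveIn g ↑fun n : ℕ => n.unpair.2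
  | pair {f h} : RecursiveIn g f → RecursiveIn g h →
      RecursiveIn g fun n => Nat.pair <$> f n <*> h n
  | comp {f h} : RecursiveIn g f → RecursiveIn g h →
      RecursiveIn g fun n => h n >>= f
  | prec {f h} : RecursiveIn g f → RecursiveIn g h →
      RecursiveIn g (Nat.unpaired fun a n =>
        n.rec (f a) fun y IH => do let i ← IH; h (Nat.pair a (Nat.pair y i)))
  | rfind {f} : RecursiveIn g f →
      RecursiveIn g fun a => Nat.rfind fun n => (fun m => m = 0) <$> f (Nat.pair a n)

/-- Turing reducibility `f ≤_T g` for elements of Baire space. -/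
def TuringLe (f g : ℕ → ℕ) : Prop := RecursiveIn g ↑f

/-- Strict Turing reducibility `f <_T g`. -/
def TuringLt (f g : ℕ → ℕ) : Prop := TuringLe f g ∧ ¬ TuringLe g f

/-- Turing equivalence `f ≡_T g`. -/
def TuringEquiv (f g : ℕ → ℕ) : Prop := TuringLe f g ∧ TuringLe g f

/-- Turing incomparability `f |_T g`. -/
def TuringIncomp (f g : ℕ → ℕ) : Prop := ¬ TuringLe f g ∧ ¬ TuringLe g f

/-- Muchnik reducibility `A ≤_w B` between mass problems. -/
def MuchnikLe (A B : Set (ℕ → ℕ)) : Prop := ∀ f ∈ B, ∃ g ∈ A, TuringLe g f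

/-- Strict Muchnik reducibility `A <_w B`. -/
def MuchnikLt (A B : Set (ℕ → ℕ)) : Prop := MuchnikLe A B ∧ ¬ MuchnikLe B A

/-- Muchnik equivalence `A ≡_w B`. -/
def MuchnikEquiv (A B : Set (ℕ → ℕ)) : Prop := MuchnikLe A B ∧ MuchnikLe B A

/-- The strict Turing upper cone `C'(f) = {g : f <_T g}`. -/
def cone (f : ℕ → ℕ) : Set (ℕ → ℕ) := {g | TuringLt f g}

/-- The recursive join `f ⊕ g`: `(f ⊕ g)(2x) = f(x)` and `(f ⊕ g)(2x+1) = g(x)`. -/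
def join (f g : ℕ → ℕ) : ℕ → ℕ := fun n => if n % 2 = 0 then f (n / 2) else g (n / 2)

/-- The join `A + B` of mass problems. -/
def joinSet (A B : Set (ℕ → ℕ)) : Set (ℕ → ℕ) := {h | ∃ f ∈ A, ∃ g ∈ B, h = join f g}

/-- Identification of `2^ω` with a subset of Baire space. -/
def ofBool (X : ℕ → Bool) : ℕ → ℕ := fun n => if X n then 1 else 0


-- ===== auxiliary development =====

inductive Code : Type
  | oracle : Code
  | zero : Code
  | succ : Code
  | left : Code
  | right : Code
  | pair : Code → Code → Code
  | comp : Code → Code → Code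
  | prec : Code → Code → Code
  | rfind : Code → Code

def evalo (g : ℕ → ℕ) : Code → (ℕ →. ℕ)
  | Code.oracle => ↑g
  | Code.zero => pure 0
  | Code.succ => ↑Nat.succ
  | Code.left => ↑fun n : ℕ => n.unpair.1
  | Code.right => ↑fun n : ℕ => n.unpair.2
  | Code.pair cf ch => fun n => Nat.pair <$> evalo g cf n <*> evalo g ch n
  | Code.comp cf ch => fun n => evalo g ch n >>= evalo g cf
  | Code.prec cf ch => Nat.unpaired fun a n =>
      n.rec (evalo g cf a) fun y IH => do let i ← IH; evalo g ch (Nat.pair a (Nat.pair y i))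
  | Code.rfind cf => fun a => Nat.rfind fun n => (fun m => m = 0) <$> evalo g cf (Nat.pair a n)

theorem recursiveIn_iff {g : ℕ → ℕ} {f : ℕ →. ℕ} :
    RecursiveIn g f ↔ ∃ c, evalo g c = f := by
  constructor
  · intro h
    induction h with
    | oracle => exact ⟨Code.oracle, rfl⟩
    | zero => exact ⟨Code.zero, rfl⟩
    | succ => exact ⟨Code.succ, rfl⟩
    | left => exact ⟨Code.left, rfl⟩
    | right => exact ⟨Code.right, rfl⟩
    | pair _ _ ih1 ih2 =>
      obtain ⟨c1, rfl⟩ := ih1; obtain ⟨c2, rfl⟩ := ih2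
      exact ⟨Code.pair c1 c2, rfl⟩
    | comp _ _ ih1 ih2 =>
      obtain ⟨c1, rfl⟩ := ih1; obtain ⟨c2, rfl⟩ := ih2
      exact ⟨Code.comp c1 c2, rfl⟩
    | prec _ _ ih1 ih2 =>
      obtain ⟨c1, rfl⟩ := ih1; obtain ⟨c2, rfl⟩ := ih2
      exact ⟨Code.prec c1 c2, rfl⟩
    | rfind _ ih =>
      obtain ⟨c, rfl⟩ := ih
      exact ⟨Code.rfind c, rfl⟩
  · rintro ⟨c, rfl⟩
    induction c with
    | oracle => exact RecursiveIn.oracle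
    | zero => exact RecursiveIn.zero
    | succ => exact RecursiveIn.succ
    | left => exact RecursiveIn.left
    | right => exact RecursiveIn.right
    | pair c1 c2 ih1 ih2 => exact RecursiveIn.pair ih1 ih2
    | comp c1 c2 ih1 ih2 => exact RecursiveIn.comp ih1 ih2
    | prec c1 c2 ih1 ih2 => exact RecursiveIn.prec ih1 ih2
    | rfind c ih => exact RecursiveIn.rfind ih

def encodeC : Code → ℕ
  | Code.oracle => 0
  | Code.zero => 1
  | Code.succ => 2
  | Code.left => 3
  | Code.right => 4
  | Code.pair a b => 4 * Nat.pair (encodeC a) (encodeC b) + 5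
  | Code.comp a b => 4 * Nat.pair (encodeC a) (encodeC b) + 6
  | Code.prec a b => 4 * Nat.pair (encodeC a) (encodeC b) + 7
  | Code.rfind a => 4 * encodeC a + 8

def decodeC : ℕ → Code
  | 0 => Code.oracle
  | 1 => Code.zero
  | 2 => Code.succ
  | 3 => Code.left
  | 4 => Code.right
  | (n+5) =>
    have h0 : n / 4 ≤ n := Nat.div_le_self n 4
    have h1 : (n / 4).unpair.1 < n + 5 :=
      lt_of_le_of_lt (le_trans (Nat.unpair_left_le _) h0) (by omega)
    have h2 : (n / 4).unpair.2 < n + 5 :=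
      lt_of_le_of_lt (le_trans (Nat.unpair_right_le _) h0) (by omega)
    have h3 : n / 4 < n + 5 := lt_of_le_of_lt h0 (by omega)
    match n % 4 with
    | 0 => Code.pair (decodeC (n / 4).unpair.1) (decodeC (n / 4).unpair.2)
    | 1 => Code.comp (decodeC (n / 4).unpair.1) (decodeC (n / 4).unpair.2)
    | 2 => Code.prec (decodeC (n / 4).unpair.1) (decodeC (n / 4).unpair.2)
    | _ => Code.rfind (decodeC (n / 4))

set_option linter.unreachableTactic false in
set_option linter.unusedTactic false in
theorem decode_encode (c : Code) : decodeC (encodeC c) = c := by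
  induction c with
  | oracle => simp [encodeC, decodeC]
  | zero => simp [encodeC, decodeC]
  | succ => simp [encodeC, decodeC]
  | left => simp [encodeC, decodeC]
  | right => simp [encodeC, decodeC]
  | pair a b iha ihb =>
    have h : encodeC (Code.pair a b) = (4 * Nat.pair (encodeC a) (encodeC b)) + 5 := rfl
    rw [h, decodeC]
    simp only [Nat.mul_mod_right, Nat.mul_div_cancel_left _ (by norm_num : 0 < 4),
      Nat.unpair_pair]
    rw [iha, ihb]
  | comp a b iha ihb =>
    have h : encodeC (Code.comp a b) = (4 * Nat.pair (encodeC a) (encodeC b) + 1) + 5 := rfl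
    rw [h, decodeC]
    simp only [Nat.mul_add_mod, Nat.mul_add_div (by norm_num : 0 < 4)]
    norm_num
    first
    | exact ⟨iha, ihb⟩
    | (rw [Nat.unpair_pair, iha, ihb])
  | prec a b iha ihb =>
    have h : encodeC (Code.prec a b) = (4 * Nat.pair (encodeC a) (encodeC b) + 2) + 5 := rfl
    rw [h, decodeC]
    simp only [Nat.mul_add_mod, Nat.mul_add_div (by norm_num : 0 < 4)]
    norm_num
    first
    | exact ⟨iha, ihb⟩
    | (rw [Nat.unpair_pair, iha, ihb])
  | rfind a iha =>
    have h : encodeC (Code.rfind a) = (4 * encodeC a + 3) + 5 := rfl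
    rw [h, decodeC]
    simp only [Nat.mul_add_mod, Nat.mul_add_div (by norm_num : 0 < 4)]
    norm_num
    rw [iha]

theorem decodeC_surj : Function.Surjective decodeC :=
  fun c => ⟨encodeC c, decode_encode c⟩

def Agree (k : ℕ) (g g' : ℕ → ℕ) : Prop := ∀ i < k, g' i = g i

theorem agree_mono {k k' : ℕ} {g g' : ℕ → ℕ} (h : k ≤ k') (ha : Agree k' g g') :
    Agree k g g' := fun i hi => ha i (lt_of_lt_of_le hi h)

theorem evalo_use {g : ℕ → ℕ} (c : Code) :
    ∀ {n m : ℕ}, m ∈ evalo g c n → ∃ k, ∀ g', Agree k g g' → m ∈ evalo g' c n := by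
  induction c with
  | oracle =>
    intro n m h
    simp only [evalo] at h ⊢
    refine ⟨n + 1, fun g' hg => ?_⟩
    have := hg n (by omega)
    simp_all [PFun.coe_val, Part.mem_some_iff]
  | zero => intro n m h; exact ⟨0, fun g' _ => h⟩
  | succ => intro n m h; exact ⟨0, fun g' _ => h⟩
  | left => intro n m h; exact ⟨0, fun g' _ => h⟩
  | right => intro n m h; exact ⟨0, fun g' _ => h⟩
  | pair cf ch ihf ihh =>
    intro n m h
    simp only [evalo] at h ⊢
    simp only [Seq.seq, Part.map_eq_map, Part.bind_eq_bind, Part.mem_bind_iff,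
      Part.mem_map_iff] at h ⊢
    obtain ⟨f1, ⟨a, ha, rfl⟩, b, hb, hm⟩ := h
    obtain ⟨k1, hk1⟩ := ihf ha
    obtain ⟨k2, hk2⟩ := ihh hb
    refine ⟨max k1 k2, fun g' hg => ?_⟩
    exact ⟨_, ⟨a, hk1 g' (agree_mono (le_max_left _ _) hg), rfl⟩,
      b, hk2 g' (agree_mono (le_max_right _ _) hg), hm⟩
  | comp cf ch ihf ihh =>
    intro n m h
    simp only [evalo] at h ⊢
    have h := Part.mem_bind_iff.1 h
    obtain ⟨a, ha, hm⟩ := h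
    obtain ⟨k1, hk1⟩ := ihh ha
    obtain ⟨k2, hk2⟩ := ihf hm
    refine ⟨max k1 k2, fun g' hg => ?_⟩
    exact Part.mem_bind_iff.2 ⟨a, hk1 g' (agree_mono (le_max_left _ _) hg),
      hk2 g' (agree_mono (le_max_right _ _) hg)⟩
  | prec cf ch ihf ihh =>
    intro p m h
    simp only [evalo, Nat.unpaired] at h ⊢
    set a := p.unpair.1
    set b := p.unpair.2
    clear_value a b
    have main : ∀ (b : ℕ) (m : ℕ),
        m ∈ (b.rec (evalo g cf a) (fun y IH => IH.bind fun i =>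
          evalo g ch (Nat.pair a (Nat.pair y i))) : Part ℕ) →
        ∃ k, ∀ g', Agree k g g' →
          m ∈ (b.rec (evalo g' cf a) (fun y IH => IH.bind fun i =>
            evalo g' ch (Nat.pair a (Nat.pair y i))) : Part ℕ) := by
      intro b
      induction b with
      | zero => intro m hm; exact ihf hm
      | succ y ih =>
        intro m hm
        simp only [Part.bind_eq_bind, Part.mem_bind_iff] at hm ⊢
        obtain ⟨i, hi, hm⟩ := hm
        obtain ⟨k1, hk1⟩ := ih i hi
        obtain ⟨k2, hk2⟩ := ihh hm
        refine ⟨max k1 k2, fun g' hg => ?_⟩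
        exact ⟨i, hk1 g' (agree_mono (le_max_left _ _) hg),
          hk2 g' (agree_mono (le_max_right _ _) hg)⟩
    exact main b m h
  | rfind cf ih =>
    intro a m h
    simp only [evalo] at h ⊢
    have hspec := Nat.rfind_spec h
    have hmin : ∀ j < m, false ∈ ((fun m => decide (m = 0)) <$> evalo g cf (Nat.pair a j)) :=
      fun j hj => Nat.rfind_min h hj
    simp only [Part.map_eq_map, Part.mem_map_iff] at hspec
    obtain ⟨z, hz, hz0⟩ := hspec
    obtain ⟨k0, hk0⟩ := ih hz
    have H2 : ∀ j, ∃ k, ∀ g', Agree k g g' → j < m →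
        false ∈ ((fun m => decide (m = 0)) <$> evalo g' cf (Nat.pair a j)) := by
      intro j
      by_cases hj : j < m
      · have := hmin j hj
        simp only [Part.map_eq_map, Part.mem_map_iff] at this
        obtain ⟨w, hw, hw0⟩ := this
        obtain ⟨k, hk⟩ := ih hw
        refine ⟨k, fun g' hg _ => ?_⟩
        simp only [Part.map_eq_map, Part.mem_map_iff]
        exact ⟨w, hk g' hg, hw0⟩
      · exact ⟨0, fun g' _ hj' => absurd hj' hj⟩
    choose K hK using H2
    refine ⟨max k0 ((Finset.range m).sup K), fun g' hg => ?_⟩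
    refine Nat.mem_rfind.2 ?_
    constructor
    · simp only [Part.map_eq_map, Part.mem_map_iff]
      exact ⟨z, hk0 g' (agree_mono (le_max_left _ _) hg), hz0⟩
    · intro j hj
      refine hK j g' (agree_mono ?_ hg) hj
      exact le_trans (Finset.le_sup (Finset.mem_range.2 hj)) (le_max_right _ _)

/-! ### Finite strings and forcing -/

def Ext (σ : List ℕ) (g : ℕ → ℕ) : Prop := ∀ i < σ.length, g i = σ.getD i 0

theorem getD_prefix {u v : List ℕ} (h : u <+: v) {i : ℕ} (hi : i < u.length) (d : ℕ) :
    u.getD i d = v.getD i d := by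
  obtain ⟨w, rfl⟩ := h
  exact (List.getD_append u w d i hi).symm

theorem ext_of_prefix {u v : List ℕ} (h : u <+: v) {g : ℕ → ℕ} (hv : Ext v g) : Ext u g := by
  intro i hi
  rw [getD_prefix h hi]
  exact hv i (lt_of_lt_of_le hi h.length_le)

def initSeg (g : ℕ → ℕ) (k : ℕ) : List ℕ := (List.range k).map g

@[simp] theorem initSeg_length (g : ℕ → ℕ) (k : ℕ) : (initSeg g k).length = k := by
  simp [initSeg]

theorem initSeg_getD (g : ℕ → ℕ) {k i : ℕ} (h : i < k) (d : ℕ) :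
    (initSeg g k).getD i d = g i := by
  rw [List.getD_eq_getElem _ _ (by simpa using h)]
  simp [initSeg]

theorem ext_initSeg (g : ℕ → ℕ) (k : ℕ) : Ext (initSeg g k) g := by
  intro i hi
  rw [initSeg_getD g (by simpa using hi)]

theorem prefix_initSeg {u : List ℕ} {g : ℕ → ℕ} (h : Ext u g) {k : ℕ} (hk : u.length ≤ k) :
    u <+: initSeg g k := by
  rw [List.prefix_iff_eq_take]
  apply List.ext_getElem
  · simp [min_eq_left, hk]
  · intro i h1 h2
    have hi : i < u.length := h1
    rw [← List.getD_eq_getElem u 0 h1]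
    rw [List.getElem_take]
    rw [← List.getD_eq_getElem _ 0, initSeg_getD g (lt_of_lt_of_le hi hk)]
    exact (h i hi).symm

def Frc (c : Code) (v : List ℕ) (n m : ℕ) : Prop := ∀ g, Ext v g → m ∈ evalo g c n

def Trigger (c : Code) (p q : List Bool) (B : List Bool → List ℕ) : Prop :=
  ∃ n, (B p).length ≤ n ∧ ∃ v, B q <+: v ∧ ∃ m, Frc c v n m

open Classical in
noncomputable def handleOne (c : Code) (p q : List Bool) (B : List Bool → List ℕ) :
    List Bool → List ℕ :=
  if _hpq : p = q then B else
  if h : Trigger c p q B then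
    fun r => if r = p then
        B p ++ (List.replicate (h.choose - (B p).length) 0
          ++ [h.choose_spec.2.choose_spec.2.choose + 1])
      else if r = q then h.choose_spec.2.choose else B r
  else B

theorem handleOne_mono (c : Code) (p q : List Bool) (B : List Bool → List ℕ) (r : List Bool) :
    B r <+: handleOne c p q B r := by
  unfold handleOne
  by_cases hpq : p = q
  · rw [dif_pos hpq]
  · rw [dif_neg hpq]
    by_cases h : Trigger c p q B
    · rw [dif_pos h]
      by_cases hp : r = p
      · subst hp
        simp only [if_pos rfl]
        exact List.prefix_append _ _
      · by_cases hq : r = q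
        · subst hq
          simp only [if_neg hp, if_pos rfl]
          exact h.choose_spec.2.choose_spec.1
        · simp only [if_neg hp, if_neg hq]
          exact List.prefix_refl _
    · rw [dif_neg h]

theorem handleOne_cases {c : Code} {p q : List Bool} (B : List Bool → List ℕ) (hpq : p ≠ q) :
    (∃ n m, n < (handleOne c p q B p).length ∧ (handleOne c p q B p).getD n 0 = m + 1 ∧
      Frc c (handleOne c p q B q) n m)
    ∨ (handleOne c p q B = B ∧ ¬ Trigger c p q B) := by
  by_cases h : Trigger c p q B
  · left
    have hq : handleOne c p q B q = h.choose_spec.2.choose := by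
      unfold handleOne
      rw [dif_neg hpq, dif_pos h]
      simp [Ne.symm hpq]
    have hp : handleOne c p q B p
        = B p ++ (List.replicate (h.choose - (B p).length) 0
            ++ [h.choose_spec.2.choose_spec.2.choose + 1]) := by
      unfold handleOne
      rw [dif_neg hpq, dif_pos h]
      simp
    have hn : (B p).length ≤ h.choose := h.choose_spec.1
    refine ⟨h.choose, h.choose_spec.2.choose_spec.2.choose, ?_, ?_, ?_⟩
    · rw [hp, List.length_append, List.length_append, List.length_replicate]
      simp only [List.length_singleton]
      omega
    · rw [hp, List.getD_append_right _ _ _ _ hn]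
      rw [List.getD_append_right _ _ _ _ (by simp)]
      simp
    · rw [hq]
      exact h.choose_spec.2.choose_spec.2.choose_spec
  · right
    constructor
    · unfold handleOne
      rw [dif_neg hpq, dif_neg h]
    · exact h

/-! ### Bit strings -/

def seg (X : ℕ → Bool) : ℕ → List Bool
  | 0 => []
  | t+1 => seg X t ++ [X t]

@[simp] theorem seg_length (X : ℕ → Bool) (t : ℕ) : (seg X t).length = t := by
  induction t with
  | zero => rfl
  | succ t ih => simp [seg, ih]

theorem seg_getD (X : ℕ → Bool) {i t : ℕ} (h : i < t) : (seg X t).getD i false = X i := by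
  induction t with
  | zero => omega
  | succ t ih =>
    rcases Nat.lt_or_ge i t with h' | h'
    · rw [seg, List.getD_append _ _ _ _ (by simpa using h'), ih h']
    · have : i = t := by omega
      subst this
      rw [seg, List.getD_append_right _ _ _ _ (by simp)]
      simp

theorem seg_ne {X Y : ℕ → Bool} {i t : ℕ} (h : i < t) (hXY : X i ≠ Y i) :
    seg X t ≠ seg Y t := by
  intro he
  apply hXY
  rw [← seg_getD X h, ← seg_getD Y h, he]

def bools : ℕ → List (List Bool)
  | 0 => [[]]
  | t+1 => (bools t).flatMap fun r => [r ++ [false], r ++ [true]]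

theorem seg_mem_bools (X : ℕ → Bool) (t : ℕ) : seg X t ∈ bools t := by
  induction t with
  | zero => simp [seg, bools]
  | succ t ih =>
    rw [bools, List.mem_flatMap]
    refine ⟨seg X t, ih, ?_⟩
    cases hx : X t <;> simp [seg, hx]

theorem seg_dropLast (X : ℕ → Bool) (t : ℕ) : (seg X (t+1)).dropLast = seg X t := by
  rw [seg]; simp

noncomputable def trips (t : ℕ) : List (Code × List Bool × List Bool) :=
  ((List.range t).map decodeC).flatMap fun c =>
    (bools t).flatMap fun p => (bools t).map fun q => (c, p, q)

theorem mem_trips {t j : ℕ} (hj : j < t) {p q : List Bool}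
    (hp : p ∈ bools t) (hq : q ∈ bools t) : (decodeC j, p, q) ∈ trips t := by
  rw [trips, List.mem_flatMap]
  refine ⟨decodeC j, List.mem_map_of_mem (List.mem_range.2 hj), ?_⟩
  rw [List.mem_flatMap]
  exact ⟨p, hp, List.mem_map_of_mem hq⟩

/-! ### The stagewise construction -/

noncomputable def stepT (B : List Bool → List ℕ) (x : Code × List Bool × List Bool) :
    List Bool → List ℕ := handleOne x.1 x.2.1 x.2.2 B

theorem foldl_stepT_mono (l : List (Code × List Bool × List Bool)) (B : List Bool → List ℕ)
    (r : List Bool) : B r <+: (l.foldl stepT B) r := by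
  induction l generalizing B with
  | nil => exact List.prefix_refl _
  | cons x l ih =>
    rw [List.foldl_cons]
    exact (handleOne_mono x.1 x.2.1 x.2.2 B r).trans (ih _)

noncomputable def stageP (t : ℕ) (B : List Bool → List ℕ) : List Bool → List ℕ :=
  (trips t).foldl stepT B

noncomputable def levels : ℕ → (List Bool → List ℕ)
  | 0 => fun _ => []
  | t+1 => fun r => stageP t (levels t) r.dropLast ++ [0]

noncomputable def sig (X : ℕ → Bool) (t : ℕ) : List ℕ := levels t (seg X t)

theorem sig_succ (X : ℕ → Bool) (t : ℕ) :
    sig X (t+1) = stageP t (levels t) (seg X t) ++ [0] := by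
  show stageP t (levels t) (seg X (t+1)).dropLast ++ [0] = _
  rw [seg_dropLast]

theorem sig_mono_succ (X : ℕ → Bool) (t : ℕ) : sig X t <+: sig X (t+1) := by
  rw [sig_succ]
  exact (foldl_stepT_mono _ _ _).trans (List.prefix_append _ _)

theorem sig_mono (X : ℕ → Bool) {t t' : ℕ} (h : t ≤ t') : sig X t <+: sig X t' := by
  induction t' with
  | zero => rw [Nat.le_zero.mp h]
  | succ t' ih =>
    rcases Nat.lt_or_ge t (t'+1) with h' | h'
    · exact (ih (by omega)).trans (sig_mono_succ X t')
    · have : t = t' + 1 := by omega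
      rw [this]

theorem sig_length (X : ℕ → Bool) (t : ℕ) : t ≤ (sig X t).length := by
  induction t with
  | zero => simp
  | succ t ih =>
    rw [sig_succ, List.length_append]
    have := (foldl_stepT_mono (trips t) (levels t) (seg X t)).length_le
    have hs : sig X t = levels t (seg X t) := rfl
    have hd : (stageP t (levels t) (seg X t)).length
        = (List.foldl stepT (levels t) (trips t) (seg X t)).length := rfl
    rw [hs] at ih
    simp only [List.length_singleton]
    omega

noncomputable def brF (X : ℕ → Bool) : ℕ → ℕ := fun n => (sig X (n+1)).getD n 0

theorem ext_sig (X : ℕ → Bool) (t : ℕ) : Ext (sig X t) (brF X) := by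
  intro i hi
  show (sig X (i+1)).getD i 0 = (sig X t).getD i 0
  rcases le_total (i+1) t with h | h
  · exact getD_prefix (sig_mono X h) (lt_of_lt_of_le (Nat.lt_succ_self i) (sig_length X (i+1))) 0
  · exact (getD_prefix (sig_mono X h) hi 0).symm

theorem req {X Y : ℕ → Bool} {i : ℕ} (hi : X i ≠ Y i) (c : Code) :
    evalo (brF Y) c ≠ ↑(brF X) := by
  intro he
  obtain ⟨j, rfl⟩ := decodeC_surj c
  set t := max (j+1) (i+1) with ht
  have hjt : j < t := lt_of_lt_of_le (Nat.lt_succ_self j) (le_max_left _ _)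
  have hit : i < t := lt_of_lt_of_le (Nat.lt_succ_self i) (le_max_right _ _)
  have hpq : seg X t ≠ seg Y t := seg_ne hit hi
  have htrip : (decodeC j, seg X t, seg Y t) ∈ trips t :=
    mem_trips hjt (seg_mem_bools X t) (seg_mem_bools Y t)
  obtain ⟨l₁, l₂, hl⟩ := List.append_of_mem htrip
  set p := seg X t
  set q := seg Y t
  set B₁ := l₁.foldl stepT (levels t) with hB₁
  set B₂ := stepT B₁ (decodeC j, p, q) with hB₂
  set B₃ := l₂.foldl stepT B₂ with hB₃
  have hstage : stageP t (levels t) = B₃ := by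
    rw [stageP, hl, List.foldl_append, List.foldl_cons]
  have h23 : ∀ r, B₂ r <+: B₃ r := fun r => foldl_stepT_mono l₂ B₂ r
  have h12 : ∀ r, B₁ r <+: B₂ r := fun r => handleOne_mono _ _ _ B₁ r
  have hpre3X : B₃ p <+: sig X (t+1) := by
    rw [sig_succ, hstage]; exact List.prefix_append _ _
  have hpre3Y : B₃ q <+: sig Y (t+1) := by
    rw [sig_succ, hstage]; exact List.prefix_append _ _
  have hX3 : Ext (B₃ p) (brF X) := ext_of_prefix hpre3X (ext_sig X (t+1))
  have hY2 : Ext (B₂ q) (brF Y) :=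
    ext_of_prefix ((h23 q).trans hpre3Y) (ext_sig Y (t+1))
  have hY1 : Ext (B₁ q) (brF Y) := ext_of_prefix (h12 q) hY2
  have hB2eq : handleOne (decodeC j) p q B₁ = B₂ := rfl
  rcases handleOne_cases (c := decodeC j) B₁ hpq with ⟨n, m, hlen, hget, hfrc⟩ | ⟨heq, hno⟩
  · rw [hB2eq] at hlen hget hfrc
    have h1 : n < (B₃ p).length := lt_of_lt_of_le hlen (h23 p).length_le
    have hfx : brF X n = m + 1 := by
      rw [hX3 n h1, ← getD_prefix (h23 p) hlen, hget]
    have hm : m ∈ evalo (brF Y) (decodeC j) n := hfrc (brF Y) hY2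
    rw [he] at hm
    simp only [PFun.coe_val, Part.mem_some_iff] at hm
    omega
  · apply hno
    have hmem : brF X (B₁ p).length ∈ evalo (brF Y) (decodeC j) (B₁ p).length := by
      rw [he]
      simp [PFun.coe_val, Part.mem_some_iff]
    obtain ⟨k, hk⟩ := evalo_use _ hmem
    refine ⟨(B₁ p).length, le_refl _,
      initSeg (brF Y) (max k (B₁ q).length),
      prefix_initSeg hY1 (le_max_right _ _),
      brF X (B₁ p).length, ?_⟩
    intro g hg
    apply hk
    intro i2 hi2
    have hlt : i2 < max k (B₁ q).length := lt_of_lt_of_le hi2 (le_max_left _ _)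
    have := hg i2 (by simpa using hlt)
    rw [this, initSeg_getD _ hlt]

theorem incomp {X Y : ℕ → Bool} (h : X ≠ Y) : ¬ TuringLe (brF X) (brF Y) := by
  intro hT
  obtain ⟨c, hc⟩ := recursiveIn_iff.mp hT
  have : ∃ i, X i ≠ Y i := by
    by_contra h'
    push_neg at h'
    exact h (funext h')
  obtain ⟨i, hi⟩ := this
  exact req hi c hc

theorem brF_inj : Function.Injective brF := by
  intro X Y h
  by_contra hne
  apply incomp hne
  rw [TuringLe, h]
  exact RecursiveIn.oracle

/-! ### The antichain of subsets trick -/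

def consB (b : Bool) (W : ℕ → Bool) : ℕ → Bool := fun n =>
  match n with
  | 0 => b
  | Nat.succ k => W k

def TZ (Z : Set (ℕ → Bool)) : Set (ℕ → Bool) :=
  {Y | Y 0 = true ↔ (fun n => Y (n+1)) ∈ Z}

theorem consB_mem {b : Bool} {W : ℕ → Bool} {Z : Set (ℕ → Bool)} :
    consB b W ∈ TZ Z ↔ (b = true ↔ W ∈ Z) := by
  have hs : (fun n => consB b W (n+1)) = W := rfl
  simp only [TZ, Set.mem_setOf_eq, hs]
  rfl

theorem TZ_both {Z Z' : Set (ℕ → Bool)} (h : Z ≠ Z') :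
    (∃ Y, Y ∈ TZ Z ∧ Y ∉ TZ Z') ∧ (∃ Y, Y ∈ TZ Z' ∧ Y ∉ TZ Z) := by
  obtain ⟨W, hW⟩ : ∃ W, ¬(W ∈ Z ↔ W ∈ Z') := by
    by_contra h'
    push_neg at h'
    exact h (Set.ext fun W => h' W)
  rcases Classical.em (W ∈ Z) with hz | hz
  · have hz' : W ∉ Z' := fun hh => hW ⟨fun _ => hh, fun _ => hz⟩
    constructor
    · exact ⟨consB true W, consB_mem.2 (by simp [hz]),
        fun hmem => hz' ((consB_mem.1 hmem).1 rfl)⟩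
    · refine ⟨consB false W, consB_mem.2 (by simp [hz']), fun hmem => ?_⟩
      have := (consB_mem.1 hmem).2 hz
      simp at this
  · have hz' : W ∈ Z' := by
      by_contra hh
      exact hW ⟨fun h1 => absurd h1 hz, fun h2 => absurd h2 hh⟩
    constructor
    · refine ⟨consB false W, consB_mem.2 (by simp [hz]), fun hmem => ?_⟩
      have := (consB_mem.1 hmem).2 hz'
      simp at this
    · exact ⟨consB true W, consB_mem.2 (by simp [hz']),
        fun hmem => hz ((consB_mem.1 hmem).1 rfl)⟩

noncomputable def famF (Z : Set (ℕ → Bool)) : Set (ℕ → ℕ) := brF '' (TZ Z)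

theorem famF_not_le {Z Z' : Set (ℕ → Bool)} (h : Z ≠ Z') :
    ¬ MuchnikLe (famF Z) (famF Z') := by
  obtain ⟨Y₂, hY₂, hY₂'⟩ := (TZ_both h).2
  intro hle
  obtain ⟨g, hgA, hgT⟩ := hle (brF Y₂) ⟨Y₂, hY₂, rfl⟩
  obtain ⟨Y, hY, rfl⟩ := hgA
  exact incomp (fun hE => hY₂' (by rw [← hE]; exact hY)) hgT

theorem famF_inj : Function.Injective famF := by
  intro Z Z' hEq
  by_contra hne
  obtain ⟨Y₂, hY₂, hY₂'⟩ := (TZ_both hne).2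
  have : brF Y₂ ∈ famF Z := hEq ▸ ⟨Y₂, hY₂, rfl⟩
  obtain ⟨Y, hY, hb⟩ := this
  exact hY₂' (brF_inj hb ▸ hY)


/-- There is an antichain of cardinality `2 ^ (2 ^ ℵ₀)` in the Muchnik lattice: a family of
mass problems of that cardinality whose members are pairwise Muchnik incomparable. -/
theorem muchnik_big_antichain :
    ∃ ℱ : Set (Set (ℕ → ℕ)), #ℱ = (2 : Cardinal) ^ ((2 : Cardinal) ^ Cardinal.aleph0) ∧
      ∀ A ∈ ℱ, ∀ B ∈ ℱ, A ≠ B → ¬ MuchnikLe A B ∧ ¬ MuchnikLe B A := by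
  refine ⟨Set.range famF, ?_, ?_⟩
  · rw [Cardinal.mk_range_eq famF famF_inj, Cardinal.mk_set]
    congr 1
    rw [Cardinal.mk_arrow]
    simp [Cardinal.mk_bool]
  · rintro A ⟨Z, rfl⟩ B ⟨Z', rfl⟩ hAB
    have hZ : Z ≠ Z' := fun hE => hAB (by rw [hE])
    exact ⟨famF_not_le hZ, famF_not_le hZ.symm⟩

end Muchnik
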